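/- Short-time lower bound for the heat kernel variance: let g_t(θ,θ') be the Green function of ∂_t g = ½ ∂²_θ g on (0,1) with boundary conditions g_t(0,θ') = ∂_θ g_t(1,θ') = 0 and initial condition δ_θ, and set q_t(θ) = ∫₀^t g_{2s}(θ,θ) ds. Then for every δ ∈ (0,1/2) there is κ_δ > 0 such that q_t(θ) ≥ κ_δ t^{1/2} for all t ∈ [0,1] and θ ∈ [δ, 1−δ]. -/

import Mathlib

open MeasureTheory ProbabilityTheory Real Filter

noncomputable section

/-- `B` is a standard Brownian motion on `[0,1]` (in fact on `[0,∞)`) started at `0`. -/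
def IsStandardBM {Ω : Type*} [MeasureSpace Ω] (B : ℝ → Ω → ℝ) : Prop :=
  (∀ t, Measurable (B t)) ∧
  (∀ᵐ ω, B 0 ω = 0) ∧
  (∀ s t : ℝ, 0 ≤ s → s ≤ t →
    Measure.map (fun ω => B t ω - B s ω) volume = gaussianReal 0 ((t - s).toNNReal)) ∧
  (∀ (n : ℕ) (u : ℕ → ℝ), Monotone u →
    iIndepFun
      (fun i : Fin n => fun ω => B (u (i.1 + 1)) ω - B (u i.1) ω) volume) ∧
  (∀ᵐ ω, Continuous fun t => B t ω)

/-- The `L²(0,1)` inner product. -/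
def innerL (f g : ℝ → ℝ) : ℝ := ∫ θ in (0:ℝ)..1, f θ * g θ

/-- The covariance operator with kernel `θ ∧ σ`. -/
def Qop (k : ℝ → ℝ) : ℝ → ℝ := fun θ => ∫ σ in (0:ℝ)..1, min θ σ * k σ

def lam (θ x y : ℝ) : ℝ := x ^ 2 + x * y / θ + (y ^ 2 - θ) / (4 * θ ^ 2)

/-- smooth symmetric probability density supported in `(-1,1)`. -/
def IsMollifier (ρ : ℝ → ℝ) : Prop :=
  (∀ n : ℕ, ContDiff ℝ n ρ) ∧ (∀ x, 0 ≤ ρ x) ∧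
  (Function.support ρ ⊆ Set.Ioo (-1) 1) ∧ (∫ x, ρ x) = 1 ∧ (∀ x, ρ (-x) = ρ x)

def mollK (ρ : ℝ → ℝ) (ε : ℝ) : ℝ → ℝ := fun x => ρ (x / ε) / ε

/-- `(-ρ_ε' * f)_θ`, i.e. the derivative in `θ` of the mollification `∫₀¹ ρ_ε(σ-θ) f σ dσ`. -/
def smoothDeriv (ρ : ℝ → ℝ) (ε : ℝ) (f : ℝ → ℝ) (θ : ℝ) : ℝ :=
  ∫ σ in (0:ℝ)..1, -(deriv (mollK ρ ε) (σ - θ)) * f σ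

def Bdot {Ω : Type*} [MeasureSpace Ω] (B : ℝ → Ω → ℝ) (ρ : ℝ → ℝ) (ε θ : ℝ) (ω : Ω) : ℝ :=
  smoothDeriv ρ ε (fun σ => B σ ω) θ

def cEps {Ω : Type*} [MeasureSpace Ω] (B : ℝ → Ω → ℝ) (ρ : ℝ → ℝ) (ε θ : ℝ) : ℝ :=
  ∫ ω, (Bdot B ρ ε θ ω) ^ 2

lemma cos_sum_telescope (a : ℝ) (N : ℕ) :
    2 * Real.sin a * ∑ i ∈ Finset.range N, Real.cos ((2 * (i:ℝ) + 1) * a)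
      = Real.sin (2 * (N:ℝ) * a) := by
  induction N with
  | zero => simp
  | succ n ih =>
    rw [Finset.sum_range_succ, mul_add, ih]
    push_cast
    rw [show (2 * ((n:ℝ) + 1)) * a = (2 * n + 1) * a + a by ring,
        show (2 * (n:ℝ)) * a = (2 * n + 1) * a - a by ring,
        Real.sin_add, Real.sin_sub]
    ring

lemma summable_aux17 : Summable (fun i : ℕ => 2 / ((i:ℝ) + 1) ^ 2) := by
  have h : Summable (fun i : ℕ => 1 / ((i:ℝ)) ^ 2) :=
    Real.summable_one_div_nat_pow.2 one_lt_two
  have h2 := (summable_nat_add_iff 1).2 h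
  have h3 : Summable (fun i : ℕ => 1 / ((i:ℝ) + 1) ^ 2) := by
    refine h2.congr fun n => ?_
    push_cast
    ring
  exact (h3.mul_left 2).congr fun n => by ring

lemma one_sub_exp_half (x : ℝ) (hx0 : 0 ≤ x) (hx1 : x ≤ 1) :
    x / 2 ≤ 1 - Real.exp (-x) := by
  have h1 : (x + 1) * Real.exp (-x) ≤ 1 := by
    calc (x + 1) * Real.exp (-x) ≤ Real.exp x * Real.exp (-x) :=
          mul_le_mul_of_nonneg_right (by linarith [Real.add_one_le_exp x]) (Real.exp_nonneg _)
      _ = 1 := by rw [← Real.exp_add]; simp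
  nlinarith [Real.exp_pos (-x)]

lemma two_sin_sq (x : ℝ) : 1 - Real.cos (2 * x) = 2 * Real.sin x ^ 2 := by
  rw [Real.cos_two_mul]
  nlinarith [Real.sin_sq_add_cos_sq x]

set_option maxHeartbeats 4000000 in
/-- Short-time lower bound `q_t(θ) ≥ κ_δ √t` for the variance
`q_t(θ) = Σ_i (1-e^{-λ_i t})/λ_i · e_i(θ)²` of the stochastic heat equation. -/
theorem stmt_17 (lamE : ℕ → ℝ) (hlam : ∀ n, lamE n = π ^ 2 / 4 * (2 * (n : ℝ) + 1) ^ 2)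
    (e : ℕ → ℝ → ℝ)
    (he : ∀ n θ, e n θ = Real.sqrt 2 * Real.sin (Real.sqrt (lamE n) * θ))
    (δ : ℝ) (hδ : δ ∈ Set.Ioo (0:ℝ) (1 / 2)) :
    ∃ κ > 0, ∀ t ∈ Set.Icc (0:ℝ) 1, ∀ θ ∈ Set.Icc δ (1 - δ),
      κ * Real.sqrt t ≤ ∑' i, (1 - Real.exp (-(lamE i) * t)) / lamE i * (e i θ) ^ 2 := by
  obtain ⟨hδ0, hδh⟩ := hδ
  have hπ := Real.pi_pos
  have hπ4 := Real.pi_le_four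
  -- basic facts on lamE and e
  have hlampos : ∀ n, 0 < lamE n := by
    intro n; rw [hlam]; positivity
  have hsqrtlam : ∀ n : ℕ, Real.sqrt (lamE n) = π * (2 * (n:ℝ) + 1) / 2 := by
    intro n
    rw [hlam, show π ^ 2 / 4 * (2 * (n:ℝ) + 1) ^ 2 = (π * (2 * (n:ℝ) + 1) / 2) ^ 2 by ring]
    exact Real.sqrt_sq (by positivity)
  have hesq : ∀ (n : ℕ) (θ : ℝ), (e n θ) ^ 2 = 1 - Real.cos ((2 * (n:ℝ) + 1) * (π * θ)) := by
    intro n θ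
    rw [he, mul_pow, Real.sq_sqrt (by norm_num : (0:ℝ) ≤ 2),
      show (2 * (n:ℝ) + 1) * (π * θ) = 2 * (Real.sqrt (lamE n) * θ) by
        rw [hsqrtlam]; ring, two_sin_sq]
  -- nonnegativity of the terms
  have hnn : ∀ (i : ℕ) (t θ : ℝ), 0 ≤ t →
      0 ≤ (1 - Real.exp (-(lamE i) * t)) / lamE i * (e i θ) ^ 2 := by
    intro i t θ ht
    have h1 : Real.exp (-(lamE i) * t) ≤ 1 := by
      rw [← Real.exp_zero]
      exact Real.exp_le_exp.2 (by nlinarith [hlampos i])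
    exact mul_nonneg (div_nonneg (by linarith) (hlampos i).le) (sq_nonneg _)
  -- summability
  have hsum : ∀ (t θ : ℝ), 0 ≤ t →
      Summable (fun i => (1 - Real.exp (-(lamE i) * t)) / lamE i * (e i θ) ^ 2) := by
    intro t θ ht
    refine Summable.of_nonneg_of_le (fun i => hnn i t θ ht) (fun i => ?_) summable_aux17
    have hl : ((i:ℝ) + 1) ^ 2 ≤ lamE i := by
      rw [hlam]
      have hi0 : (0:ℝ) ≤ (i:ℝ) := Nat.cast_nonneg i
      have h1 : ((i:ℝ) + 1) ^ 2 ≤ (2 * (i:ℝ) + 1) ^ 2 := by nlinarith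
      have hπ2 : 4 ≤ π ^ 2 := by nlinarith [Real.pi_gt_three]
      nlinarith [sq_nonneg (2 * (i:ℝ) + 1)]
    have he2 : (e i θ) ^ 2 ≤ 2 := by
      rw [hesq]
      nlinarith [Real.neg_one_le_cos ((2 * (i:ℝ) + 1) * (π * θ))]
    have hnum : 1 - Real.exp (-(lamE i) * t) ≤ 1 := by
      nlinarith [Real.exp_pos (-(lamE i) * t)]
    have hnum0 : 0 ≤ 1 - Real.exp (-(lamE i) * t) := by
      have : Real.exp (-(lamE i) * t) ≤ 1 := by
        rw [← Real.exp_zero]; exact Real.exp_le_exp.2 (by nlinarith [hlampos i])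
      linarith
    have hi1 : (0:ℝ) < ((i:ℝ) + 1) ^ 2 := by positivity
    calc (1 - Real.exp (-(lamE i) * t)) / lamE i * (e i θ) ^ 2
        ≤ 1 / ((i:ℝ) + 1) ^ 2 * 2 := by
          apply mul_le_mul
          · exact div_le_div₀ zero_le_one hnum hi1 hl
          · exact he2
          · rw [hesq]; nlinarith [Real.cos_le_one ((2 * (i:ℝ) + 1) * (π * θ))]
          · positivity
      _ = 2 / ((i:ℝ) + 1) ^ 2 := by ring
  -- sine lower bounds on the strip
  obtain ⟨s, hs_def⟩ : ∃ x : ℝ, x = Real.sin (π * δ) := ⟨_, rfl⟩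
  have hs : 0 < s := by
    rw [hs_def]; exact Real.sin_pos_of_pos_of_lt_pi (by positivity) (by nlinarith)
  obtain ⟨C, hC_def⟩ : ∃ x : ℝ, x = 1 / (2 * s) := ⟨_, rfl⟩
  have hC : 0 < C := by rw [hC_def]; positivity
  obtain ⟨t₀, ht₀_def⟩ : ∃ x : ℝ, x = 1 / (64 * (1 + C) ^ 2) := ⟨_, rfl⟩
  have ht₀ : 0 < t₀ := by rw [ht₀_def]; positivity
  have hsqrt_t₀ : Real.sqrt t₀ = 1 / (8 * (1 + C)) := by
    rw [show t₀ = (1 / (8 * (1 + C))) ^ 2 by rw [ht₀_def]; field_simp; ring]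
    exact Real.sqrt_sq (by positivity)
  obtain ⟨s2, hs2_def⟩ : ∃ x : ℝ, x = Real.sin (π * δ / 2) := ⟨_, rfl⟩
  have hs2 : 0 < s2 := by
    rw [hs2_def]; exact Real.sin_pos_of_pos_of_lt_pi (by positivity) (by nlinarith)
  refine ⟨min (1 / 16) (t₀ * s2 ^ 2),
    lt_min (by norm_num) (mul_pos ht₀ (pow_pos hs2 2)), ?_⟩
  intro t ht θ hθ
  obtain ⟨ht0, ht1⟩ := ht
  obtain ⟨hθ1, hθ2⟩ := hθ
  have hθ0 : 0 < θ := lt_of_lt_of_le hδ0 hθ1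
  -- sin (π θ) ≥ s
  have hsinθ : s ≤ Real.sin (π * θ) := by
    rw [hs_def]
    rcases le_or_gt θ (1 / 2) with hc | hc
    · exact Real.sin_le_sin_of_le_of_le_pi_div_two (by nlinarith)
        (by nlinarith) (by nlinarith)
    · rw [show Real.sin (π * θ) = Real.sin (π - π * θ) from (Real.sin_pi_sub (π * θ)).symm]
      exact Real.sin_le_sin_of_le_of_le_pi_div_two (by nlinarith)
        (by nlinarith) (by nlinarith)
  have hsinθ2 : s2 ≤ Real.sin (π * θ / 2) := by
    rw [hs2_def]
    exact Real.sin_le_sin_of_le_of_le_pi_div_two (by nlinarith) (by nlinarith) (by nlinarith)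
  rcases eq_or_lt_of_le ht0 with h0 | htpos
  · rw [← h0, Real.sqrt_zero, mul_zero]
    exact tsum_nonneg fun i => hnn i 0 θ le_rfl
  rcases le_or_gt t t₀ with hts | hts
  · -- small time: use the first N ≈ 1/(4√t) modes
    have hst : 0 < Real.sqrt t := Real.sqrt_pos.2 htpos
    obtain ⟨N, hN_def⟩ : ∃ n : ℕ, n = Nat.floor (1 / (4 * Real.sqrt t)) := ⟨_, rfl⟩
    have hNle : (N : ℝ) ≤ 1 / (4 * Real.sqrt t) := by
      rw [hN_def]; exact Nat.floor_le (by positivity)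
    have hNge : 1 / (4 * Real.sqrt t) - 1 ≤ (N : ℝ) := by
      have h := Nat.lt_floor_add_one (1 / (4 * Real.sqrt t))
      rw [← hN_def] at h
      push_cast at h ⊢
      linarith
    obtain ⟨S, hS_def⟩ : ∃ x : ℝ,
        x = ∑ i ∈ Finset.range N, Real.cos ((2 * (i:ℝ) + 1) * (π * θ)) := ⟨_, rfl⟩
    have htele := cos_sum_telescope (π * θ) N
    have hsinθpos : 0 < Real.sin (π * θ) := lt_of_lt_of_le hs hsinθ
    have hSC : S ≤ C := by
      rcases le_or_gt S 0 with hS0 | hS0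
      · linarith
      · rw [hC_def, le_div_iff₀ (by linarith), hS_def]
        rw [hS_def] at hS0
        have h1 : Real.sin (2 * (N:ℝ) * (π * θ)) ≤ 1 := Real.sin_le_one _
        nlinarith
    -- termwise lower bound
    have hterm : ∀ i ∈ Finset.range N,
        t / 2 * (1 - Real.cos ((2 * (i:ℝ) + 1) * (π * θ)))
          ≤ (1 - Real.exp (-(lamE i) * t)) / lamE i * (e i θ) ^ 2 := by
      intro i hi
      rw [Finset.mem_range] at hi
      have h2i : (2 * (i:ℝ) + 1) * Real.sqrt t ≤ 1 / 2 := by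
        have hiN : (i:ℝ) + 1 ≤ (N:ℝ) := by exact_mod_cast Nat.succ_le_of_lt hi
        have : (2 * (i:ℝ) + 1) ≤ 2 * (N:ℝ) := by linarith
        calc (2 * (i:ℝ) + 1) * Real.sqrt t ≤ 2 * (N:ℝ) * Real.sqrt t :=
              mul_le_mul_of_nonneg_right this hst.le
          _ ≤ 2 * (1 / (4 * Real.sqrt t)) * Real.sqrt t := by
              exact mul_le_mul_of_nonneg_right (by linarith) hst.le
          _ = 1 / 2 := by field_simp; ring
      have hi0 : (0:ℝ) ≤ 2 * (i:ℝ) + 1 := by positivity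
      have hsq : (2 * (i:ℝ) + 1) ^ 2 * t ≤ 1 / 4 := by
        have h := mul_le_mul h2i h2i (by positivity) (by norm_num)
        nlinarith [Real.sq_sqrt ht0]
      have hx1 : lamE i * t ≤ 1 := by
        rw [hlam]
        have hπ2 : π ^ 2 ≤ 16 := by nlinarith
        nlinarith [mul_nonneg (sq_nonneg (2 * (i:ℝ) + 1)) ht0]
      have hx0 : 0 ≤ lamE i * t := mul_nonneg (hlampos i).le ht0
      have hexp := one_sub_exp_half (lamE i * t) hx0 hx1
      have hdiv : t / 2 ≤ (1 - Real.exp (-(lamE i) * t)) / lamE i := by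
        rw [le_div_iff₀ (hlampos i)]
        have : -(lamE i) * t = -(lamE i * t) := by ring
        rw [this]
        nlinarith
      have hcos : 0 ≤ 1 - Real.cos ((2 * (i:ℝ) + 1) * (π * θ)) := by
        nlinarith [Real.cos_le_one ((2 * (i:ℝ) + 1) * (π * θ))]
      calc t / 2 * (1 - Real.cos ((2 * (i:ℝ) + 1) * (π * θ)))
          ≤ (1 - Real.exp (-(lamE i) * t)) / lamE i *
              (1 - Real.cos ((2 * (i:ℝ) + 1) * (π * θ))) :=
            mul_le_mul_of_nonneg_right hdiv hcos
        _ = (1 - Real.exp (-(lamE i) * t)) / lamE i * (e i θ) ^ 2 := by rw [hesq]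
    have hsum_lb : t / 2 * ((N:ℝ) - S) ≤
        ∑ i ∈ Finset.range N, (1 - Real.exp (-(lamE i) * t)) / lamE i * (e i θ) ^ 2 := by
      calc t / 2 * ((N:ℝ) - S)
          = ∑ i ∈ Finset.range N,
              t / 2 * (1 - Real.cos ((2 * (i:ℝ) + 1) * (π * θ))) := by
            rw [hS_def]
            simp only [mul_sub, mul_one, Finset.sum_sub_distrib, Finset.sum_const,
              Finset.card_range, nsmul_eq_mul, ← Finset.mul_sum]
            ring
        _ ≤ _ := Finset.sum_le_sum hterm
    have hpartial : ∑ i ∈ Finset.range N,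
        (1 - Real.exp (-(lamE i) * t)) / lamE i * (e i θ) ^ 2
          ≤ ∑' i, (1 - Real.exp (-(lamE i) * t)) / lamE i * (e i θ) ^ 2 :=
      Summable.sum_le_tsum _ (fun i _ => hnn i t θ ht0) (hsum t θ ht0)
    -- numeric chain
    have hs_small : Real.sqrt t ≤ 1 / (8 * (1 + C)) := by
      rw [← hsqrt_t₀]; exact Real.sqrt_le_sqrt hts
    have h8 : 1 + C ≤ 1 / (8 * Real.sqrt t) := by
      rw [le_div_iff₀ (by positivity)]
      rw [le_div_iff₀ (by positivity)] at hs_small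
      nlinarith
    have hNS : 1 / (8 * Real.sqrt t) ≤ (N:ℝ) - S := by
      have : 1 / (8 * Real.sqrt t) ≤ 1 / (4 * Real.sqrt t) - (1 + C) := by
        have : 1 / (4 * Real.sqrt t) = 2 * (1 / (8 * Real.sqrt t)) := by field_simp; ring
        linarith
      linarith
    have hfin : Real.sqrt t / 16 ≤ t / 2 * ((N:ℝ) - S) := by
      have heq : t / 2 * (1 / (8 * Real.sqrt t)) = Real.sqrt t / 16 := by
        field_simp
        nlinarith [Real.mul_self_sqrt ht0, Real.sq_sqrt ht0]
      calc Real.sqrt t / 16 = t / 2 * (1 / (8 * Real.sqrt t)) := heq.symm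
        _ ≤ t / 2 * ((N:ℝ) - S) := mul_le_mul_of_nonneg_left hNS (by positivity)
    calc min (1 / 16) (t₀ * s2 ^ 2) * Real.sqrt t ≤ 1 / 16 * Real.sqrt t :=
          mul_le_mul_of_nonneg_right (min_le_left _ _) hst.le
      _ = Real.sqrt t / 16 := by ring
      _ ≤ _ := le_trans hfin (le_trans hsum_lb hpartial)
  · -- t ≥ t₀: use the first mode only
    have hterm0 : t₀ * s2 ^ 2 ≤ (1 - Real.exp (-(lamE 0) * t)) / lamE 0 * (e 0 θ) ^ 2 := by
      have hl0 : lamE 0 = π ^ 2 / 4 := by rw [hlam]; norm_num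
      have hx1 : lamE 0 * t₀ ≤ 1 := by
        rw [hl0, ht₀_def]
        rw [div_mul_div_comm, div_le_one (by positivity)]
        nlinarith [sq_nonneg C]
      have hx0 : 0 ≤ lamE 0 * t₀ := mul_nonneg (hlampos 0).le ht₀.le
      have hmono : Real.exp (-(lamE 0) * t) ≤ Real.exp (-(lamE 0 * t₀)) := by
        apply Real.exp_le_exp.2
        have := (hlampos 0)
        nlinarith
      have hexp := one_sub_exp_half (lamE 0 * t₀) hx0 hx1
      have hnum : lamE 0 * t₀ / 2 ≤ 1 - Real.exp (-(lamE 0) * t) := by linarith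
      have he0 : 2 * s2 ^ 2 ≤ (e 0 θ) ^ 2 := by
        rw [hesq, show (2 * ((0:ℕ):ℝ) + 1) * (π * θ) = 2 * (π * θ / 2) by push_cast; ring,
          two_sin_sq]
        have := pow_le_pow_left₀ hs2.le hsinθ2 2
        linarith
      have hdiv : t₀ / 2 ≤ (1 - Real.exp (-(lamE 0) * t)) / lamE 0 := by
        rw [le_div_iff₀ (hlampos 0)]
        calc t₀ / 2 * lamE 0 = lamE 0 * t₀ / 2 := by ring
          _ ≤ _ := hnum
      calc t₀ * s2 ^ 2 = t₀ / 2 * (2 * s2 ^ 2) := by ring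
        _ ≤ (1 - Real.exp (-(lamE 0) * t)) / lamE 0 * (e 0 θ) ^ 2 :=
            mul_le_mul hdiv he0 (by positivity)
              (div_nonneg
                (by have h1 : Real.exp (-(lamE 0) * t) ≤ 1 := by
                      rw [← Real.exp_zero]
                      exact Real.exp_le_exp.2 (by nlinarith [hlampos 0])
                    linarith)
                (hlampos 0).le)
    have hle : (1 - Real.exp (-(lamE 0) * t)) / lamE 0 * (e 0 θ) ^ 2 ≤
        ∑' i, (1 - Real.exp (-(lamE i) * t)) / lamE i * (e i θ) ^ 2 :=
      Summable.le_tsum (hsum t θ ht0) 0 (fun i _ => hnn i t θ ht0)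
    have hst1 : Real.sqrt t ≤ 1 := Real.sqrt_le_one.mpr ht1
    calc min (1 / 16) (t₀ * s2 ^ 2) * Real.sqrt t ≤ t₀ * s2 ^ 2 * 1 :=
          mul_le_mul (min_le_right _ _) hst1 (Real.sqrt_nonneg t) (by positivity)
      _ = t₀ * s2 ^ 2 := mul_one _
      _ ≤ _ := le_trans hterm0 hle

end
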